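/- The set S := {1/p + 1/q + 1/r − 1 | p, q, r ∈ ℤ_{>0}} ∩ [0,1] satisfies the ascending chain condition, i.e., it contains no infinite strictly increasing sequence. -/

import Mathlib

/-- A set of reals satisfies the descending chain condition if it contains
no infinite strictly decreasing sequence. -/
def DCC (S : Set ℝ) : Prop := ¬ ∃ f : ℕ → ℝ, (∀ n, f n ∈ S) ∧ StrictAnti f

/-- A set of reals satisfies the ascending chain condition if it contains
no infinite strictly increasing sequence. -/
def ACC (S : Set ℝ) : Prop := ¬ ∃ f : ℕ → ℝ, (∀ n, f n ∈ S) ∧ StrictMono f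

/-- `I⁺ = {0} ∪ {x ∈ [0,1] | x is a finite (nonempty) sum of elements of I}`. -/
def plusSet (I : Set ℝ) : Set ℝ :=
  {0} ∪ {x | 0 ≤ x ∧ x ≤ 1 ∧ ∃ l : List ℝ, l ≠ [] ∧ (∀ j ∈ l, j ∈ I) ∧ l.sum = x}

/-- `D(I) = {a ≤ 1 | a = (m - 1 + f)/m, m ∈ ℤ_{>0}, f ∈ I⁺}`. -/
def DSet (I : Set ℝ) : Set ℝ :=
  {a | a ≤ 1 ∧ ∃ m : ℕ, 0 < m ∧ ∃ f ∈ plusSet I, a = ((m : ℝ) - 1 + f) / m}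

/-- `D_d(I) = {a ≤ 1 | a = (m - 1 + f + k·d)/m, k, m ∈ ℤ_{>0}, f ∈ I⁺}`. -/
def DdSet (d : ℝ) (I : Set ℝ) : Set ℝ :=
  {a | a ≤ 1 ∧ ∃ k m : ℕ, 0 < k ∧ 0 < m ∧ ∃ f ∈ plusSet I,
    a = ((m : ℝ) - 1 + f + (k : ℝ) * d) / m}


lemma nat_monotone_subseq (f : ℕ → ℕ) :
    ∃ g : ℕ → ℕ, StrictMono g ∧ Monotone (f ∘ g) :=
  let ⟨g, hg⟩ := ((Set.isWF_univ_iff.2 (inferInstance : WellFoundedLT ℕ)).isPWO).exists_monotone_subseq (f := f)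
    (fun _ => trivial)
  ⟨g, g.strictMono, hg⟩

theorem platonic_thresholds_ACC :
    ACC ({t : ℝ | ∃ p q r : ℕ, 0 < p ∧ 0 < q ∧ 0 < r ∧
      t = 1 / (p : ℝ) + 1 / (q : ℝ) + 1 / (r : ℝ) - 1} ∩ Set.Icc (0:ℝ) 1) := by
  rintro ⟨f, hmem, hmono⟩
  choose p q r hp hq hr hf using fun n => (hmem n).1
  obtain ⟨g1, hg1, hp1⟩ := nat_monotone_subseq p
  obtain ⟨g2, hg2, hq2⟩ := nat_monotone_subseq (q ∘ g1)
  obtain ⟨g3, hg3, hr3⟩ := nat_monotone_subseq (r ∘ g1 ∘ g2)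
  set h : ℕ → ℕ := g1 ∘ g2 ∘ g3 with hh
  have hhm : StrictMono h := hg1.comp (hg2.comp hg3)
  have hple : p (h 0) ≤ p (h 1) := (hp1.comp (hg2.comp hg3).monotone) (by norm_num)
  have hqle : q (h 0) ≤ q (h 1) := (hq2.comp hg3.monotone) (by norm_num)
  have hrle : r (h 0) ≤ r (h 1) := hr3 (by norm_num)
  have key : f (h 1) ≤ f (h 0) := by
    rw [hf (h 0), hf (h 1)]
    have c1 : (1:ℝ) / p (h 1) ≤ 1 / p (h 0) :=
      one_div_le_one_div_of_le (by exact_mod_cast hp (h 0)) (by exact_mod_cast hple)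
    have c2 : (1:ℝ) / q (h 1) ≤ 1 / q (h 0) :=
      one_div_le_one_div_of_le (by exact_mod_cast hq (h 0)) (by exact_mod_cast hqle)
    have c3 : (1:ℝ) / r (h 1) ≤ 1 / r (h 0) :=
      one_div_le_one_div_of_le (by exact_mod_cast hr (h 0)) (by exact_mod_cast hrle)
    linarith
  exact absurd key (not_le.2 (hmono (hhm (by norm_num))))
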